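/- Let (Ω, ℱ, P) be a probability space, 𝔊 ⊆ ℱ a sub-σ-algebra, Y : Ω → ℝ with E[Y²] < ∞, and μ_Y := E[Y ∣ 𝔊] the conditional expectation. Let R : Ω → ℝ be 𝔊-measurable with 0 ≤ R ≤ C almost surely for some C ≥ 0, and let g : Ω → ℝ be 𝔊-measurable with E[g²] < ∞. Then E[R·(Y − g)²] = E[R·(Y − μ_Y)²] + E[R·(μ_Y − g)²]; in particular E[R·(Y − g)²] ≥ E[R·(Y − μ_Y)²], i.e., the conditional expectation minimizes the weighted squared-error risk over 𝔊-measurable candidates. -/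

import Mathlib

open MeasureTheory

lemma aux_integrable_mul {Ω : Type*} [MeasurableSpace Ω] {P : Measure Ω} {f g : Ω → ℝ}
    (hf : MemLp f 2 P) (hg : MemLp g 2 P) :
    Integrable (fun ω => f ω * g ω) P := by
  have h := (hf.add hg).integrable_sq
  have hf2 := hf.integrable_sq
  have hg2 := hg.integrable_sq
  have heq : (fun ω => f ω * g ω)
      = fun ω => ((f ω + g ω) ^ 2 - f ω ^ 2 - g ω ^ 2) / 2 := by
    funext ω; ring
  rw [heq]
  exact ((h.sub hf2).sub hg2).div_const 2

theorem statement_12_aux {Ω : Type*} (𝔊 : MeasurableSpace Ω) [ℱ : MeasurableSpace Ω]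
    (P : Measure Ω) (hP : IsProbabilityMeasure P) (h𝔊 : 𝔊 ≤ ℱ)
    (Y : Ω → ℝ) (hY : MemLp Y 2 P)
    (R : Ω → ℝ) (C : ℝ) (hC : 0 ≤ C) (hR_meas : Measurable[𝔊] R)
    (hR_bd : ∀ᵐ ω ∂P, 0 ≤ R ω ∧ R ω ≤ C)
    (g : Ω → ℝ) (hg_meas : Measurable[𝔊] g) (hg : MemLp g 2 P) :
    ((∫ ω, R ω * (Y ω - g ω) ^ 2 ∂P) =
        (∫ ω, R ω * (Y ω - (P[Y|𝔊]) ω) ^ 2 ∂P) +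
          ∫ ω, R ω * ((P[Y|𝔊]) ω - g ω) ^ 2 ∂P) ∧
      (∫ ω, R ω * (Y ω - (P[Y|𝔊]) ω) ^ 2 ∂P) ≤ ∫ ω, R ω * (Y ω - g ω) ^ 2 ∂P := by
  haveI := hP
  have hσ : SigmaFinite (P.trim h𝔊) := by
    have : IsFiniteMeasure (P.trim h𝔊) := isFiniteMeasure_trim h𝔊
    infer_instance
  set μY : Ω → ℝ := P[Y|𝔊] with hμYdef
  -- μY is in L²
  have hμY : MemLp μY 2 P := by
    have hfe : (hY.toLp Y : Ω → ℝ) =ᵐ[P] Y := hY.coeFn_toLp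
    have hint : Integrable ((condExpL2 ℝ ℝ h𝔊 (hY.toLp Y) : Lp ℝ 2 P) : Ω → ℝ) P :=
      (Lp.memLp _).integrable one_le_two
    have hae : ((condExpL2 ℝ ℝ h𝔊 (hY.toLp Y) : Lp ℝ 2 P) : Ω → ℝ) =ᵐ[P] μY := by
      refine ae_eq_condExp_of_forall_setIntegral_eq h𝔊 (hY.integrable one_le_two)
        (fun s _ _ => hint.integrableOn)
        (fun s hs hμs => ?_) (aestronglyMeasurable_condExpL2 h𝔊 _)
      rw [integral_condExpL2_eq (𝕜 := ℝ) h𝔊 (hY.toLp Y) hs hμs.ne]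
      exact setIntegral_congr_ae (h𝔊 s hs) (hfe.mono fun x hx _ => hx)
    exact (Lp.memLp _).ae_eq hae
  -- basic measurability / boundedness of R
  have hR_meas' : AEStronglyMeasurable R P :=
    ((hR_meas.mono h𝔊 le_rfl).stronglyMeasurable).aestronglyMeasurable
  have hR_bd' : ∀ᵐ ω ∂P, ‖R ω‖ ≤ C := by
    filter_upwards [hR_bd] with ω hω
    rw [Real.norm_eq_abs, abs_of_nonneg hω.1]; exact hω.2
  -- L² differences
  have hYμ : MemLp (fun ω => Y ω - μY ω) 2 P := hY.sub hμY
  have hμg : MemLp (fun ω => μY ω - g ω) 2 P := hμY.sub hg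
  -- integrability of each term
  have IA : Integrable (fun ω => R ω * (Y ω - μY ω) ^ 2) P :=
    hYμ.integrable_sq.bdd_mul hR_meas' hR_bd'
  have IB : Integrable (fun ω => R ω * (μY ω - g ω) ^ 2) P :=
    hμg.integrable_sq.bdd_mul hR_meas' hR_bd'
  have IG : Integrable (fun ω => R ω * (Y ω - g ω) ^ 2) P :=
    (hY.sub hg).integrable_sq.bdd_mul hR_meas' hR_bd'
  -- the cross term
  set h : Ω → ℝ := fun ω => R ω * (μY ω - g ω) with hhdef
  have hh_meas : StronglyMeasurable[𝔊] h :=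
    hR_meas.stronglyMeasurable.mul
      (stronglyMeasurable_condExp.sub hg_meas.stronglyMeasurable)
  have hh2 : MemLp h 2 P := by
    refine (memLp_two_iff_integrable_sq
      ((hh_meas.mono h𝔊).aestronglyMeasurable)).2 ?_
    have heq : (fun ω => h ω ^ 2)
        = fun ω => (R ω * R ω) * (μY ω - g ω) ^ 2 := by
      funext ω; simp only [hhdef]; ring
    rw [heq]
    refine hμg.integrable_sq.bdd_mul (c := C * C) (hR_meas'.mul hR_meas') ?_
    filter_upwards [hR_bd] with ω hω
    rw [Real.norm_eq_abs, abs_of_nonneg (mul_nonneg hω.1 hω.1)]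
    exact mul_le_mul hω.2 hω.2 hω.1 hC
  have IC : Integrable (fun ω => h ω * (Y ω - μY ω)) P := aux_integrable_mul hh2 hYμ
  have IC' : Integrable (h * (Y - μY)) P := by
    have heq : h * (Y - μY) = fun ω => h ω * (Y ω - μY ω) := rfl
    rw [heq]; exact IC
  -- the conditional expectation of Y - μY is zero
  have hzero : P[Y - μY|𝔊] =ᵐ[P] 0 := by
    have h1 : P[Y - μY|𝔊] =ᵐ[P] P[Y|𝔊] - P[μY|𝔊] :=
      condExp_sub (hY.integrable one_le_two) integrable_condExp 𝔊
    have h2 : P[μY|𝔊] =ᵐ[P] μY := condExp_condExp_of_le le_rfl h𝔊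
    filter_upwards [h1, h2] with ω e1 e2
    simp only [Pi.zero_apply, e1, Pi.sub_apply, e2, ← hμYdef, sub_self]
  -- the cross term has zero integral
  have hcross : ∫ ω, h ω * (Y ω - μY ω) ∂P = 0 := by
    have hmul : P[h * (Y - μY)|𝔊] =ᵐ[P] h * P[Y - μY|𝔊] :=
      condExp_mul_of_stronglyMeasurable_left hh_meas IC' (hYμ.integrable one_le_two)
    have hmz : P[h * (Y - μY)|𝔊] =ᵐ[P] 0 := by
      filter_upwards [hmul, hzero] with ω e1 e2
      simp only [e1, Pi.mul_apply, e2, Pi.zero_apply, mul_zero]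
    calc ∫ ω, h ω * (Y ω - μY ω) ∂P = ∫ ω, (h * (Y - μY)) ω ∂P := rfl
      _ = ∫ ω, (P[h * (Y - μY)|𝔊]) ω ∂P := (integral_condExp h𝔊).symm
      _ = 0 := by rw [integral_congr_ae hmz]; simp
  -- pointwise Pythagorean expansion
  have key : ∀ ω, R ω * (Y ω - g ω) ^ 2
      = R ω * (Y ω - μY ω) ^ 2 + 2 * (h ω * (Y ω - μY ω))
        + R ω * (μY ω - g ω) ^ 2 := by
    intro ω; simp only [hhdef]; ring
  have hsum : ∫ ω, R ω * (Y ω - g ω) ^ 2 ∂P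
      = (∫ ω, R ω * (Y ω - μY ω) ^ 2 ∂P) + (∫ ω, R ω * (μY ω - g ω) ^ 2 ∂P) := by
    calc ∫ ω, R ω * (Y ω - g ω) ^ 2 ∂P
        = ∫ ω, (R ω * (Y ω - μY ω) ^ 2 + 2 * (h ω * (Y ω - μY ω))
            + R ω * (μY ω - g ω) ^ 2) ∂P :=
          integral_congr_ae (Filter.Eventually.of_forall key)
      _ = (∫ ω, (R ω * (Y ω - μY ω) ^ 2 + 2 * (h ω * (Y ω - μY ω))) ∂P)
            + ∫ ω, R ω * (μY ω - g ω) ^ 2 ∂P :=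
          integral_add (IA.add (IC.const_mul 2)) IB
      _ = ((∫ ω, R ω * (Y ω - μY ω) ^ 2 ∂P) + ∫ ω, 2 * (h ω * (Y ω - μY ω)) ∂P)
            + ∫ ω, R ω * (μY ω - g ω) ^ 2 ∂P := by
          rw [integral_add IA (IC.const_mul 2)]
      _ = (∫ ω, R ω * (Y ω - μY ω) ^ 2 ∂P) + ∫ ω, R ω * (μY ω - g ω) ^ 2 ∂P := by
          rw [integral_const_mul, hcross]; ring
  have hBnn : 0 ≤ ∫ ω, R ω * (μY ω - g ω) ^ 2 ∂P := by
    refine integral_nonneg_of_ae ?_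
    filter_upwards [hR_bd] with ω hω
    exact mul_nonneg hω.1 (sq_nonneg _)
  exact ⟨hsum, by linarith⟩

/-- The conditional expectation minimizes the weighted squared-error risk over
`𝔊`-measurable candidates: the weighted Pythagorean identity and the resulting
risk inequality. -/
theorem statement_12 {Ω : Type*} [ℱ : MeasurableSpace Ω] (P : Measure Ω)
    [IsProbabilityMeasure P] (𝔊 : MeasurableSpace Ω) (h𝔊 : 𝔊 ≤ ℱ)
    (Y : Ω → ℝ) (hY : MemLp Y 2 P)
    (R : Ω → ℝ) (C : ℝ) (hC : 0 ≤ C) (hR_meas : Measurable[𝔊] R)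
    (hR_bd : ∀ᵐ ω ∂P, 0 ≤ R ω ∧ R ω ≤ C)
    (g : Ω → ℝ) (hg_meas : Measurable[𝔊] g) (hg : MemLp g 2 P) :
    ((∫ ω, R ω * (Y ω - g ω) ^ 2 ∂P) =
        (∫ ω, R ω * (Y ω - (P[Y|𝔊]) ω) ^ 2 ∂P) +
          ∫ ω, R ω * ((P[Y|𝔊]) ω - g ω) ^ 2 ∂P) ∧
      (∫ ω, R ω * (Y ω - (P[Y|𝔊]) ω) ^ 2 ∂P) ≤ ∫ ω, R ω * (Y ω - g ω) ^ 2 ∂P :=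
  statement_12_aux 𝔊 (ℱ := ℱ) P ‹_› h𝔊 Y hY R C hC hR_meas hR_bd g hg_meas hg
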